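/- The system is nonuniformly exponentially stable if and only if there exist a constant d > 0 and a nondecreasing function N : ℝ₊ → [1,∞) such that Σ_{m=n}^∞ e^{d(m-n)} ‖A_m^p x‖ ≤ N(n) ‖A_n^p x‖ for all n ≥ p and x ∈ X. -/

import Mathlib

open scoped BigOperators

/-- The evolution operator `A_m^n = A(m) ∘ ⋯ ∘ A(n+1)`, with `A_n^n = 1`. -/
noncomputable def evol {X : Type*} [NormedAddCommGroup X] [NormedSpace ℝ X]
    (A : ℕ → X →L[ℝ] X) (m n : ℕ) : X →L[ℝ] X :=
  ((List.range (m - n)).map (fun k => A (n + k + 1))).foldl (fun P B => B ∘L P) 1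

lemma geom_aux {r : ℝ} (h0 : 0 ≤ r) (h1 : r < 1) (n : ℕ) :
    ∑ i ∈ Finset.range n, r ^ i ≤ (1 - r)⁻¹ := by
  have h1r : (0:ℝ) < 1 - r := by linarith
  have heq : (r ^ n - 1) / (r - 1) = (1 - r ^ n) / (1 - r) := by
    rw [← neg_div_neg_eq]; ring_nf
  rw [geom_sum_eq h1.ne, heq, inv_eq_one_div, div_le_div_iff₀ h1r h1r]
  nlinarith [pow_nonneg h0 n]

theorem stmt8 {X : Type*} [NormedAddCommGroup X] [NormedSpace ℝ X] [CompleteSpace X]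
    (A : ℕ → X →L[ℝ] X) :
    (∃ α : ℝ, ∃ N : ℝ → ℝ, 0 < α ∧ MonotoneOn N (Set.Ici 0) ∧
      (∀ t : ℝ, 0 ≤ t → 1 ≤ N t) ∧
      ∀ p n m : ℕ, p ≤ n → n ≤ m → ∀ x : X,
        ‖evol A m p x‖ ≤ N n * Real.exp (-α * ((m : ℝ) - n)) * ‖evol A n p x‖) ↔
    (∃ d : ℝ, ∃ N : ℝ → ℝ, 0 < d ∧ MonotoneOn N (Set.Ici 0) ∧
      (∀ t : ℝ, 0 ≤ t → 1 ≤ N t) ∧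
      ∀ p n : ℕ, p ≤ n → ∀ x : X, ∀ M : ℕ, n ≤ M →
        ∑ m ∈ Finset.Icc n M, Real.exp (d * ((m : ℝ) - n)) * ‖evol A m p x‖
          ≤ N n * ‖evol A n p x‖) := by
  constructor
  · rintro ⟨α, N, hα, hmono, hN1, hbound⟩
    set r := Real.exp (-(α/2)) with hrdef
    have hr0 : 0 < r := Real.exp_pos _
    have hr1 : r < 1 := by
      rw [hrdef, Real.exp_lt_one_iff]; linarith
    have h1r : (0:ℝ) < 1 - r := by linarith
    have hinv : (1:ℝ) ≤ (1 - r)⁻¹ := by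
      rw [one_le_inv_iff₀]; constructor <;> [exact h1r; linarith [hr0]]
    refine ⟨α/2, fun t => N t * (1-r)⁻¹, by linarith, ?_, ?_, ?_⟩
    · intro a ha b hb hab
      exact mul_le_mul_of_nonneg_right (hmono ha hb hab) (by positivity)
    · intro t ht
      calc (1:ℝ) ≤ N t := hN1 t ht
        _ = N t * 1 := (mul_one _).symm
        _ ≤ N t * (1-r)⁻¹ := by
            apply mul_le_mul_of_nonneg_left hinv (by linarith [hN1 t ht])
    · intro p n hpn x M hnM
      have hNn : 0 ≤ N n := le_trans zero_le_one (hN1 n (Nat.cast_nonneg n))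
      have key : ∀ m ∈ Finset.Icc n M,
          Real.exp ((α/2) * ((m : ℝ) - n)) * ‖evol A m p x‖
            ≤ N n * ‖evol A n p x‖ * r ^ (m - n) := by
        intro m hm
        obtain ⟨hnm, _⟩ := Finset.mem_Icc.mp hm
        have hcast : ((m : ℝ) - n) = ((m - n : ℕ) : ℝ) := by
          push_cast [Nat.cast_sub hnm]; ring
        have hrp : r ^ (m - n) = Real.exp (-(α/2) * ((m : ℝ) - n)) := by
          rw [hcast, hrdef, ← Real.exp_nat_mul]; ring_nf
        calc Real.exp ((α/2) * ((m : ℝ) - n)) * ‖evol A m p x‖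
            ≤ Real.exp ((α/2) * ((m : ℝ) - n)) *
              (N n * Real.exp (-α * ((m : ℝ) - n)) * ‖evol A n p x‖) := by
              exact mul_le_mul_of_nonneg_left (hbound p n m hpn hnm x) (Real.exp_pos _).le
          _ = N n * ‖evol A n p x‖ * Real.exp (-(α/2) * ((m : ℝ) - n)) := by
              have hexp : Real.exp (α/2 * ((m : ℝ) - n)) * Real.exp (-α * ((m : ℝ) - n))
                  = Real.exp (-(α/2) * ((m : ℝ) - n)) := by
                rw [← Real.exp_add]; congr 1; ring
              rw [← hexp]; ring
          _ = N n * ‖evol A n p x‖ * r ^ (m - n) := by rw [hrp]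
      calc ∑ m ∈ Finset.Icc n M, Real.exp ((α/2) * ((m : ℝ) - n)) * ‖evol A m p x‖
          ≤ ∑ m ∈ Finset.Icc n M, N n * ‖evol A n p x‖ * r ^ (m - n) :=
            Finset.sum_le_sum key
        _ = N n * ‖evol A n p x‖ * ∑ m ∈ Finset.Icc n M, r ^ (m - n) := by
            rw [Finset.mul_sum]
        _ ≤ N n * ‖evol A n p x‖ * (1 - r)⁻¹ := by
            apply mul_le_mul_of_nonneg_left _ (by positivity)
            have : ∑ m ∈ Finset.Icc n M, r ^ (m - n)
                = ∑ i ∈ Finset.range (M + 1 - n), r ^ i := by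
              rw [← Finset.Ico_add_one_right_eq_Icc, Finset.sum_Ico_eq_sum_range]
              exact Finset.sum_congr rfl fun i _ => by
                congr 1
                omega
            rw [this]
            exact geom_aux hr0.le hr1 _
        _ = N n * (1 - r)⁻¹ * ‖evol A n p x‖ := by ring
  · rintro ⟨d, N, hd, hmono, hN1, hbound⟩
    refine ⟨d, N, hd, hmono, hN1, ?_⟩
    intro p n m hpn hnm x
    have hsum := hbound p n hpn x m hnm
    have hterm : Real.exp (d * ((m : ℝ) - n)) * ‖evol A m p x‖
        ≤ N n * ‖evol A n p x‖ := by
      refine le_trans (Finset.single_le_sum (f := fun k : ℕ =>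
        Real.exp (d * ((k : ℝ) - n)) * ‖evol A k p x‖)
        (fun k _ => by positivity) (Finset.mem_Icc.mpr ⟨hnm, le_refl m⟩)) hsum
    have hpos : (0:ℝ) < Real.exp (d * ((m : ℝ) - n)) := Real.exp_pos _
    have hinv : Real.exp (-d * ((m : ℝ) - n)) = (Real.exp (d * ((m : ℝ) - n)))⁻¹ := by
      rw [← Real.exp_neg]; congr 1; ring
    calc ‖evol A m p x‖
        = (Real.exp (d * ((m : ℝ) - n)))⁻¹ * (Real.exp (d * ((m : ℝ) - n)) * ‖evol A m p x‖) := by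
          field_simp
      _ ≤ (Real.exp (d * ((m : ℝ) - n)))⁻¹ * (N n * ‖evol A n p x‖) := by
          exact mul_le_mul_of_nonneg_left hterm (by positivity)
      _ = N n * Real.exp (-d * ((m : ℝ) - n)) * ‖evol A n p x‖ := by
          rw [hinv]; ring
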